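/- For n ≥ 11, the number of maximal unrefinable partitions of T_n − (n−1) equals 1, of T_n − (n−3) equals 1, and of T_n − (n−5) equals 2. -/

import Mathlib

set_option maxHeartbeats 1000000

/-- The n-th triangular number. -/
def T (n : ℕ) : ℕ := n * (n + 1) / 2

/-- A partition of `N` into distinct parts, represented as a finite set of
positive integers with at least two elements summing to `N`. -/
def DistinctPartition (N : ℕ) (S : Finset ℕ) : Prop :=
  (∀ x ∈ S, 0 < x) ∧ 2 ≤ S.card ∧ S.sum id = N

/-- The missing parts: integers in `{1, …, λ_t}` not appearing in the partition. -/
def Missing (S : Finset ℕ) : Finset ℕ := Finset.Icc 1 (S.sup id) \ S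

/-- No part is the sum of two distinct missing parts. -/
def Unrefinable (S : Finset ℕ) : Prop :=
  ∀ a ∈ Missing S, ∀ b ∈ Missing S, a ≠ b → a + b ∉ S

def UnrefinablePartition (N : ℕ) (S : Finset ℕ) : Prop :=
  DistinctPartition N S ∧ Unrefinable S

/-- A maximal unrefinable partition: its largest part is maximal among the
largest parts of all unrefinable partitions of `N`. -/
def MaximalUnrefinable (N : ℕ) (S : Finset ℕ) : Prop :=
  UnrefinablePartition N S ∧
    ∀ S' : Finset ℕ, UnrefinablePartition N S' → S'.sup id ≤ S.sup id

lemma peel' (j : ℕ) (hj : 1 ≤ j) :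
    (Finset.Icc 1 j).sum id = (Finset.Icc 1 (j-1)).sum id + j := by
  obtain ⟨i, rfl⟩ : ∃ i, j = i + 1 := ⟨j - 1, by omega⟩
  rw [Finset.sum_Icc_succ_top (by omega) id]
  simp

lemma T_eq_sum (k : ℕ) : T k = (Finset.Icc 1 k).sum id := by
  induction k with
  | zero => simp [T]
  | succ i ih =>
    rw [Finset.sum_Icc_succ_top (by omega) id, ← ih]
    unfold T
    simp only [id_eq]
    have h1 : (i+1) * (i+1+1) = i * (i+1) + 2 * (i+1) := by ring
    have h2 : i * (i + 1) % 2 = 0 := by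
      rcases Nat.even_mul_succ_self i with ⟨c, hc⟩; omega
    omega

lemma supIcc (j : ℕ) (hj : 1 ≤ j) : (Finset.Icc 1 j).sup id = j := by
  apply le_antisymm
  · exact Finset.sup_le fun x hx => (Finset.mem_Icc.mp hx).2
  · exact Finset.le_sup (f := id) (Finset.mem_Icc.mpr ⟨hj, le_rfl⟩)

/-- Chain of peel equations, bundled. -/
lemma chain (n : ℕ) (hn : 11 ≤ n) :
    T n = (Finset.Icc 1 (n-6)).sum id + (n-5) + (n-4) + (n-3) + (n-2) + (n-1) + n ∧
    (Finset.Icc 1 (n-5)).sum id = (Finset.Icc 1 (n-6)).sum id + (n-5) ∧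
    (Finset.Icc 1 (n-4)).sum id = (Finset.Icc 1 (n-6)).sum id + (n-5) + (n-4) ∧
    (Finset.Icc 1 (n-3)).sum id = (Finset.Icc 1 (n-6)).sum id + (n-5) + (n-4) + (n-3) ∧
    (Finset.Icc 1 (n-2)).sum id = (Finset.Icc 1 (n-6)).sum id + (n-5) + (n-4) + (n-3) + (n-2) := by
  have hT := T_eq_sum n
  have e0 := peel' n (by omega)
  have e1 : (Finset.Icc 1 (n-1)).sum id = (Finset.Icc 1 (n-2)).sum id + (n-1) := by
    have := peel' (n-1) (by omega); rwa [show n-1-1 = n-2 by omega] at this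
  have e2 : (Finset.Icc 1 (n-2)).sum id = (Finset.Icc 1 (n-3)).sum id + (n-2) := by
    have := peel' (n-2) (by omega); rwa [show n-2-1 = n-3 by omega] at this
  have e3 : (Finset.Icc 1 (n-3)).sum id = (Finset.Icc 1 (n-4)).sum id + (n-3) := by
    have := peel' (n-3) (by omega); rwa [show n-3-1 = n-4 by omega] at this
  have e4 : (Finset.Icc 1 (n-4)).sum id = (Finset.Icc 1 (n-5)).sum id + (n-4) := by
    have := peel' (n-4) (by omega); rwa [show n-4-1 = n-5 by omega] at this
  have e5 : (Finset.Icc 1 (n-5)).sum id = (Finset.Icc 1 (n-6)).sum id + (n-5) := by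
    have := peel' (n-5) (by omega); rwa [show n-5-1 = n-6 by omega] at this
  omega
lemma struct {N : ℕ} {S : Finset ℕ} (hU : UnrefinablePartition N S) (k : ℕ)
    (hk : 2*k < S.sup id) :
    ∃ F L : Finset ℕ, F ⊆ Finset.Icc 1 k ∧ (∀ a ∈ Finset.Icc 1 k, (a ∈ F ↔ a ∉ S)) ∧
      (∀ x ∈ L, k+1 ≤ x) ∧
      (Finset.Icc 1 k).sum id + S.sup id + F.sum (fun a => S.sup id - 2*a) + L.sum id = N ∧
      (L = ∅ → ∀ x, x ∈ S ↔ (x = S.sup id ∨ (x ∈ Finset.Icc 1 k ∧ x ∉ F) ∨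
          ∃ a ∈ F, S.sup id - a = x)) := by
  obtain ⟨⟨hpos, hcard, hsum⟩, hunref⟩ := hU
  have hne : S.Nonempty := Finset.card_pos.mp (by omega)
  have hmem : S.sup id ∈ S := by
    obtain ⟨b, hb, he⟩ := Finset.exists_mem_eq_sup S hne id
    rw [he]; exact hb
  have hub : ∀ x ∈ S, x ≤ S.sup id := fun x hx => Finset.le_sup (f := id) hx
  classical
  set h : ℕ → ℕ := fun a => if a ∈ S then a else S.sup id - a with hh
  have hpair : ∀ a ∈ Finset.Icc 1 k, h a ∈ S := by
    intro a ha
    rw [Finset.mem_Icc] at ha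
    by_cases haS : a ∈ S
    · simp [hh, haS]
    · by_cases hbS : S.sup id - a ∈ S
      · simp [hh, haS, hbS]
      · exfalso
        have hMa : a ∈ Missing S := by
          simp only [Missing, Finset.mem_sdiff, Finset.mem_Icc]
          exact ⟨⟨ha.1, by omega⟩, haS⟩
        have hMb : S.sup id - a ∈ Missing S := by
          simp only [Missing, Finset.mem_sdiff, Finset.mem_Icc]
          exact ⟨⟨by omega, by omega⟩, hbS⟩
        exact hunref a hMa (S.sup id - a) hMb (by omega)
          (by rw [show a + (S.sup id - a) = S.sup id by omega]; exact hmem)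
  have hinj : ∀ x ∈ Finset.Icc 1 k, ∀ y ∈ Finset.Icc 1 k, h x = h y → x = y := by
    intro x hx y hy hxy
    rw [Finset.mem_Icc] at hx hy
    by_cases hxS : x ∈ S <;> by_cases hyS : y ∈ S <;>
      simp only [hh, hxS, hyS, if_pos, if_neg, if_true, if_false] at hxy <;> omega
  refine ⟨(Finset.Icc 1 k).filter (fun a => a ∉ S),
    S \ insert (S.sup id) ((Finset.Icc 1 k).image h),
    Finset.filter_subset _ _, ?_, ?_, ?_, ?_⟩
  · intro a ha; simp [Finset.mem_filter, ha]
  · intro x hx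
    simp only [Finset.mem_sdiff, Finset.mem_insert, Finset.mem_image, not_or, not_exists] at hx
    obtain ⟨hxS, hxm, hximg⟩ := hx
    by_contra hc
    have hx1 : x ∈ Finset.Icc 1 k := Finset.mem_Icc.mpr ⟨hpos x hxS, by omega⟩
    exact hximg x ⟨hx1, by simp [hh, hxS]⟩
  · -- the sum equation
    have hWsub : insert (S.sup id) ((Finset.Icc 1 k).image h) ⊆ S := by
      rw [Finset.insert_subset_iff]
      exact ⟨hmem, Finset.image_subset_iff.mpr hpair⟩
    have hmnotin : S.sup id ∉ (Finset.Icc 1 k).image h := by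
      simp only [Finset.mem_image, not_exists]
      intro a
      rintro ⟨ha, hax⟩
      rw [Finset.mem_Icc] at ha
      by_cases haS : a ∈ S <;> simp only [hh, haS, if_true, if_false] at hax <;> omega
    have hL := Finset.sum_sdiff (f := id) hWsub
    rw [Finset.sum_insert hmnotin, Finset.sum_image hinj] at hL
    have hsplit := Finset.sum_filter_add_sum_filter_not (Finset.Icc 1 k) (fun a => a ∈ S)
      (fun x => id (h x))
    have h1 : ((Finset.Icc 1 k).filter (fun a => a ∈ S)).sum (fun x => id (h x)) =
        ((Finset.Icc 1 k).filter (fun a => a ∈ S)).sum id := by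
      apply Finset.sum_congr rfl
      intro a ha
      rw [Finset.mem_filter] at ha
      simp [hh, ha.2]
    have h2 : ((Finset.Icc 1 k).filter (fun a => ¬ a ∈ S)).sum (fun x => id (h x)) =
        ((Finset.Icc 1 k).filter (fun a => ¬ a ∈ S)).sum id +
        ((Finset.Icc 1 k).filter (fun a => ¬ a ∈ S)).sum (fun a => S.sup id - 2*a) := by
      rw [← Finset.sum_add_distrib]
      apply Finset.sum_congr rfl
      intro a ha
      rw [Finset.mem_filter, Finset.mem_Icc] at ha
      simp only [hh, ha.2, if_neg, id_eq, if_false]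
      omega
    have h3 := Finset.sum_filter_add_sum_filter_not (Finset.Icc 1 k) (fun a => a ∈ S) id
    have hfe : ((Finset.Icc 1 k).filter (fun a => a ∉ S)) =
        ((Finset.Icc 1 k).filter (fun a => ¬ a ∈ S)) := rfl
    rw [hfe]
    simp only [Function.id_def] at hL hsplit h1 h2 h3 hsum ⊢
    omega
  · intro hL0 x
    have hSW : S ⊆ insert (S.sup id) ((Finset.Icc 1 k).image h) :=
      Finset.sdiff_eq_empty_iff_subset.mp hL0
    constructor
    · intro hxS
      rcases Finset.mem_insert.mp (hSW hxS) with hx | hx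
      · exact Or.inl hx
      · obtain ⟨a, ha, hax⟩ := Finset.mem_image.mp hx
        by_cases haS : a ∈ S
        · have hax' : a = x := by simpa [hh, haS] using hax
          subst hax'
          exact Or.inr (Or.inl ⟨ha, by simp [Finset.mem_filter, haS]⟩)
        · refine Or.inr (Or.inr ⟨a, by simp [Finset.mem_filter, ha, haS], ?_⟩)
          simpa [hh, haS] using hax
    · rintro (rfl | ⟨hx1, hx2⟩ | ⟨a, ha, rfl⟩)
      · exact hmem
      · rw [Finset.mem_filter] at hx2
        push_neg at hx2
        by_contra hc
        exact hc (hx2 hx1)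
      · rw [Finset.mem_filter] at ha
        have := hpair a ha.1
        simp only [hh, ha.2, if_neg, if_false] at this
        exact this

lemma sup_le_bound (n : ℕ) (hn : 11 ≤ n) (d : ℕ) (hd : d ≤ 5) (S : Finset ℕ)
    (hU : UnrefinablePartition (T n - (n - d)) S) : S.sup id ≤ 2*n-4 := by
  by_contra hgt
  push_neg at hgt
  obtain ⟨F, L, _, _, _, heq, _⟩ := struct hU (n-2) (by omega)
  obtain ⟨hT, c5, c4, c3, c2⟩ := chain n hn
  omega

def P1 (n : ℕ) : Finset ℕ := insert (2*n-4) (insert (n-1) (Finset.Icc 1 (n-4)))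
def P3 (n : ℕ) : Finset ℕ := insert (2*n-4) (insert n (insert (n-3) (Finset.Icc 1 (n-5))))
def P5A (n : ℕ) : Finset ℕ := insert (2*n-4) (insert n (insert (n-1) (Finset.Icc 1 (n-5))))
def P5B (n : ℕ) : Finset ℕ :=
  insert (2*n-4) (insert (n+1) (insert (n-3) (insert (n-4) (Finset.Icc 1 (n-6)))))

lemma memP1 (n x : ℕ) : x ∈ P1 n ↔ (x = 2*n-4 ∨ x = n-1 ∨ (1 ≤ x ∧ x ≤ n-4)) := by
  unfold P1; simp only [Finset.mem_insert, Finset.mem_Icc]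

lemma memP3 (n x : ℕ) : x ∈ P3 n ↔ (x = 2*n-4 ∨ x = n ∨ x = n-3 ∨ (1 ≤ x ∧ x ≤ n-5)) := by
  unfold P3; simp only [Finset.mem_insert, Finset.mem_Icc]

lemma memP5A (n x : ℕ) : x ∈ P5A n ↔ (x = 2*n-4 ∨ x = n ∨ x = n-1 ∨ (1 ≤ x ∧ x ≤ n-5)) := by
  unfold P5A; simp only [Finset.mem_insert, Finset.mem_Icc]

lemma memP5B (n x : ℕ) :
    x ∈ P5B n ↔ (x = 2*n-4 ∨ x = n+1 ∨ x = n-3 ∨ x = n-4 ∨ (1 ≤ x ∧ x ≤ n-6)) := by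
  unfold P5B; simp only [Finset.mem_insert, Finset.mem_Icc]

lemma supP1 (n : ℕ) (hn : 11 ≤ n) : (P1 n).sup id = 2*n-4 := by
  unfold P1
  rw [Finset.sup_insert, Finset.sup_insert, supIcc (n-4) (by omega)]
  simp only [id_eq]
  omega

lemma supP3 (n : ℕ) (hn : 11 ≤ n) : (P3 n).sup id = 2*n-4 := by
  unfold P3
  rw [Finset.sup_insert, Finset.sup_insert, Finset.sup_insert, supIcc (n-5) (by omega)]
  simp only [id_eq]
  omega

lemma supP5A (n : ℕ) (hn : 11 ≤ n) : (P5A n).sup id = 2*n-4 := by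
  unfold P5A
  rw [Finset.sup_insert, Finset.sup_insert, Finset.sup_insert, supIcc (n-5) (by omega)]
  simp only [id_eq]
  omega

lemma supP5B (n : ℕ) (hn : 11 ≤ n) : (P5B n).sup id = 2*n-4 := by
  unfold P5B
  rw [Finset.sup_insert, Finset.sup_insert, Finset.sup_insert, Finset.sup_insert,
    supIcc (n-6) (by omega)]
  simp only [id_eq]
  omega

lemma sumP1 (n : ℕ) (hn : 11 ≤ n) : (P1 n).sum id = T n - (n - 1) := by
  obtain ⟨hT, c5, c4, c3, c2⟩ := chain n hn
  unfold P1
  rw [Finset.sum_insert (by simp only [Finset.mem_insert, Finset.mem_Icc]; omega),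
    Finset.sum_insert (by simp only [Finset.mem_Icc]; omega)]
  simp only [Function.id_def] at hT c5 c4 c3 c2 ⊢
  omega

lemma sumP3 (n : ℕ) (hn : 11 ≤ n) : (P3 n).sum id = T n - (n - 3) := by
  obtain ⟨hT, c5, c4, c3, c2⟩ := chain n hn
  unfold P3
  rw [Finset.sum_insert (by simp only [Finset.mem_insert, Finset.mem_Icc]; omega),
    Finset.sum_insert (by simp only [Finset.mem_insert, Finset.mem_Icc]; omega),
    Finset.sum_insert (by simp only [Finset.mem_Icc]; omega)]
  simp only [Function.id_def] at hT c5 c4 c3 c2 ⊢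
  omega

lemma sumP5A (n : ℕ) (hn : 11 ≤ n) : (P5A n).sum id = T n - (n - 5) := by
  obtain ⟨hT, c5, c4, c3, c2⟩ := chain n hn
  unfold P5A
  rw [Finset.sum_insert (by simp only [Finset.mem_insert, Finset.mem_Icc]; omega),
    Finset.sum_insert (by simp only [Finset.mem_insert, Finset.mem_Icc]; omega),
    Finset.sum_insert (by simp only [Finset.mem_Icc]; omega)]
  simp only [Function.id_def] at hT c5 c4 c3 c2 ⊢
  omega

lemma sumP5B (n : ℕ) (hn : 11 ≤ n) : (P5B n).sum id = T n - (n - 5) := by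
  obtain ⟨hT, c5, c4, c3, c2⟩ := chain n hn
  unfold P5B
  rw [Finset.sum_insert (by simp only [Finset.mem_insert, Finset.mem_Icc]; omega),
    Finset.sum_insert (by simp only [Finset.mem_insert, Finset.mem_Icc]; omega),
    Finset.sum_insert (by simp only [Finset.mem_insert, Finset.mem_Icc]; omega),
    Finset.sum_insert (by simp only [Finset.mem_Icc]; omega)]
  simp only [Function.id_def] at hT c5 c4 c3 c2 ⊢
  omega

lemma card2 (n : ℕ) (hn : 11 ≤ n) (S : Finset ℕ) (a b : ℕ) (hab : a ≠ b)
    (ha : a ∈ S) (hb : b ∈ S) : 2 ≤ S.card := by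
  have hsub : ({a, b} : Finset ℕ) ⊆ S := by
    intro x hx
    rw [Finset.mem_insert, Finset.mem_singleton] at hx
    rcases hx with rfl | rfl
    · exact ha
    · exact hb
  have := Finset.card_le_card hsub
  rwa [Finset.card_pair hab] at this

lemma unrefP1 (n : ℕ) (hn : 11 ≤ n) : UnrefinablePartition (T n - (n - 1)) (P1 n) := by
  refine ⟨⟨?_, ?_, sumP1 n hn⟩, ?_⟩
  · intro x hx; rw [memP1] at hx; omega
  · exact card2 n hn _ (2*n-4) (n-1) (by omega) ((memP1 n _).mpr (by omega))
      ((memP1 n _).mpr (by omega))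
  · intro a ha b hb hab
    simp only [Missing, Finset.mem_sdiff, Finset.mem_Icc, supP1 n hn, memP1] at ha hb
    rw [memP1]
    omega

lemma unrefP3 (n : ℕ) (hn : 11 ≤ n) : UnrefinablePartition (T n - (n - 3)) (P3 n) := by
  refine ⟨⟨?_, ?_, sumP3 n hn⟩, ?_⟩
  · intro x hx; rw [memP3] at hx; omega
  · exact card2 n hn _ (2*n-4) n (by omega) ((memP3 n _).mpr (by omega))
      ((memP3 n _).mpr (by omega))
  · intro a ha b hb hab
    simp only [Missing, Finset.mem_sdiff, Finset.mem_Icc, supP3 n hn, memP3] at ha hb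
    rw [memP3]
    omega

lemma unrefP5A (n : ℕ) (hn : 11 ≤ n) : UnrefinablePartition (T n - (n - 5)) (P5A n) := by
  refine ⟨⟨?_, ?_, sumP5A n hn⟩, ?_⟩
  · intro x hx; rw [memP5A] at hx; omega
  · exact card2 n hn _ (2*n-4) n (by omega) ((memP5A n _).mpr (by omega))
      ((memP5A n _).mpr (by omega))
  · intro a ha b hb hab
    simp only [Missing, Finset.mem_sdiff, Finset.mem_Icc, supP5A n hn, memP5A] at ha hb
    rw [memP5A]
    omega

lemma unrefP5B (n : ℕ) (hn : 11 ≤ n) : UnrefinablePartition (T n - (n - 5)) (P5B n) := by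
  refine ⟨⟨?_, ?_, sumP5B n hn⟩, ?_⟩
  · intro x hx; rw [memP5B] at hx; omega
  · exact card2 n hn _ (2*n-4) (n+1) (by omega) ((memP5B n _).mpr (by omega))
      ((memP5B n _).mpr (by omega))
  · intro a ha b hb hab
    simp only [Missing, Finset.mem_sdiff, Finset.mem_Icc, supP5B n hn, memP5B] at ha hb
    rw [memP5B]
    omega

lemma classify1 (n : ℕ) (hn : 11 ≤ n) (S : Finset ℕ)
    (hU : UnrefinablePartition (T n - (n - 1)) S) (hsupS : S.sup id = 2*n-4) : S = P1 n := by
  obtain ⟨hT, c5, c4, c3, c2⟩ := chain n hn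
  simp only [Function.id_def] at hT c5 c4 c3 c2
  obtain ⟨F, L, hFsub, hFiff, hLge, heq, hrep⟩ := struct hU (n-3) (by omega)
  simp only [hsupS] at heq hrep
  simp only [Function.id_def] at heq
  have hL0 : L = ∅ := by
    rcases Finset.eq_empty_or_nonempty L with h | h
    · exact h
    · exfalso
      obtain ⟨x, hx⟩ := h
      have h1 := hLge x hx
      have h2 : x ≤ ∑ y ∈ L, y :=
        Finset.single_le_sum (f := fun y => y) (fun i _ => Nat.zero_le _) hx
      omega
  have hLsum : (∑ y ∈ L, y) = 0 := by rw [hL0]; simp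
  have hFsing : F = {n-3} := by
    have hsub : F ⊆ {n-3} := by
      intro a haF
      have haI := hFsub haF
      rw [Finset.mem_Icc] at haI
      have hle : 2*n-4 - 2*a ≤ ∑ b ∈ F, (2*n-4 - 2*b) :=
        Finset.single_le_sum (f := fun b => 2*n-4 - 2*b) (fun i _ => Nat.zero_le _) haF
      rw [Finset.mem_singleton]
      omega
    rcases Finset.subset_singleton_iff.mp hsub with h | h
    · exfalso
      rw [h, Finset.sum_empty] at heq
      omega
    · exact h
  have hrep' := hrep hL0
  apply Finset.ext
  intro x
  rw [hrep' x, memP1, hFsing]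
  simp only [Finset.mem_Icc, Finset.mem_singleton, exists_eq_left]
  omega

lemma classify3 (n : ℕ) (hn : 11 ≤ n) (S : Finset ℕ)
    (hU : UnrefinablePartition (T n - (n - 3)) S) (hsupS : S.sup id = 2*n-4) : S = P3 n := by
  obtain ⟨hT, c5, c4, c3, c2⟩ := chain n hn
  simp only [Function.id_def] at hT c5 c4 c3 c2
  obtain ⟨F, L, hFsub, hFiff, hLge, heq, hrep⟩ := struct hU (n-3) (by omega)
  simp only [hsupS] at heq hrep
  simp only [Function.id_def] at heq
  have hL0 : L = ∅ := by
    rcases Finset.eq_empty_or_nonempty L with h | h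
    · exact h
    · exfalso
      obtain ⟨x, hx⟩ := h
      have h1 := hLge x hx
      have h2 : x ≤ ∑ y ∈ L, y :=
        Finset.single_le_sum (f := fun y => y) (fun i _ => Nat.zero_le _) hx
      omega
  have hLsum : (∑ y ∈ L, y) = 0 := by rw [hL0]; simp
  have hrep' := hrep hL0
  have hmemF : ∀ a ∈ F, a = n-4 ∨ a = n-3 := by
    intro a haF
    have haI := hFsub haF
    rw [Finset.mem_Icc] at haI
    have hle : 2*n-4 - 2*a ≤ ∑ b ∈ F, (2*n-4 - 2*b) :=
      Finset.single_le_sum (f := fun b => 2*n-4 - 2*b) (fun i _ => Nat.zero_le _) haF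
    omega
  by_cases h4 : n-4 ∈ F <;> by_cases h3 : n-3 ∈ F
  · exfalso
    have hF : F = {n-4, n-3} := by
      apply Finset.ext; intro a
      simp only [Finset.mem_insert, Finset.mem_singleton]
      constructor
      · intro ha; exact hmemF a ha
      · rintro (rfl | rfl)
        · exact h4
        · exact h3
    rw [hF, Finset.sum_insert (by simp only [Finset.mem_singleton]; omega),
      Finset.sum_singleton] at heq
    omega
  · have hF : F = {n-4} := by
      apply Finset.ext; intro a
      simp only [Finset.mem_singleton]
      constructor
      · intro ha
        rcases hmemF a ha with rfl | rfl
        · rfl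
        · exact absurd ha h3
      · rintro rfl; exact h4
    apply Finset.ext
    intro x
    rw [hrep' x, memP3, hF]
    simp only [Finset.mem_Icc, Finset.mem_singleton, exists_eq_left]
    omega
  · exfalso
    have hF : F = {n-3} := by
      apply Finset.ext; intro a
      simp only [Finset.mem_singleton]
      constructor
      · intro ha
        rcases hmemF a ha with rfl | rfl
        · exact absurd ha h4
        · rfl
      · rintro rfl; exact h3
    rw [hF, Finset.sum_singleton] at heq
    omega
  · exfalso
    have hF : F = ∅ := by
      apply Finset.eq_empty_iff_forall_notMem.mpr
      intro a ha
      rcases hmemF a ha with rfl | rfl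
      · exact h4 ha
      · exact h3 ha
    rw [hF, Finset.sum_empty] at heq
    omega

lemma repB (n : ℕ) (hn : 11 ≤ n) (S : Finset ℕ) (F : Finset ℕ)
    (hrep' : ∀ x, x ∈ S ↔ (x = 2*n-4 ∨ (x ∈ Finset.Icc 1 (n-3) ∧ x ∉ F) ∨
      ∃ a ∈ F, 2*n-4 - a = x))
    (hF : F = {n-5}) : S = P5B n := by
  apply Finset.ext
  intro x
  rw [hrep' x, memP5B, hF]
  simp only [Finset.mem_Icc, Finset.mem_singleton, exists_eq_left]
  omega

lemma repA (n : ℕ) (hn : 11 ≤ n) (S : Finset ℕ) (F : Finset ℕ)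
    (hrep' : ∀ x, x ∈ S ↔ (x = 2*n-4 ∨ (x ∈ Finset.Icc 1 (n-3) ∧ x ∉ F) ∨
      ∃ a ∈ F, 2*n-4 - a = x))
    (hF : F = {n-4, n-3}) : S = P5A n := by
  apply Finset.ext
  intro x
  rw [hrep' x, memP5A, hF]
  simp only [Finset.mem_insert, Finset.mem_Icc, Finset.mem_singleton,
    exists_eq_or_imp, exists_eq_left]
  omega

set_option maxHeartbeats 3000000 in
lemma classify5 (n : ℕ) (hn : 11 ≤ n) (S : Finset ℕ)
    (hU : UnrefinablePartition (T n - (n - 5)) S) (hsupS : S.sup id = 2*n-4) :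
    S = P5A n ∨ S = P5B n := by
  obtain ⟨hT, c5, c4, c3, c2⟩ := chain n hn
  simp only [Function.id_def] at hT c5 c4 c3 c2
  obtain ⟨F, L, hFsub, hFiff, hLge, heq, hrep⟩ := struct hU (n-3) (by omega)
  simp only [hsupS] at heq hrep
  simp only [Function.id_def] at heq
  have hL0 : L = ∅ := by
    rcases Finset.eq_empty_or_nonempty L with h | h
    · exact h
    · exfalso
      obtain ⟨x, hx⟩ := h
      have h1 := hLge x hx
      have h2 : x ≤ ∑ y ∈ L, y :=
        Finset.single_le_sum (f := fun y => y) (fun i _ => Nat.zero_le _) hx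
      omega
  have hLsum : (∑ y ∈ L, y) = 0 := by rw [hL0]; simp
  have hrep' := hrep hL0
  have hmemF : ∀ a ∈ F, a = n-5 ∨ a = n-4 ∨ a = n-3 := by
    intro a haF
    have haI := hFsub haF
    rw [Finset.mem_Icc] at haI
    have hle : 2*n-4 - 2*a ≤ ∑ b ∈ F, (2*n-4 - 2*b) :=
      Finset.single_le_sum (f := fun b => 2*n-4 - 2*b) (fun i _ => Nat.zero_le _) haF
    omega
  by_cases h5 : n-5 ∈ F <;> by_cases h4 : n-4 ∈ F <;> by_cases h3 : n-3 ∈ F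
  · exfalso
    have hF : F = {n-5, n-4, n-3} := by
      apply Finset.ext; intro a
      simp only [Finset.mem_insert, Finset.mem_singleton]
      constructor
      · intro ha; exact hmemF a ha
      · rintro (rfl | rfl | rfl)
        · exact h5
        · exact h4
        · exact h3
    rw [hF, Finset.sum_insert (by simp only [Finset.mem_insert, Finset.mem_singleton]; omega),
      Finset.sum_insert (by simp only [Finset.mem_singleton]; omega),
      Finset.sum_singleton] at heq
    omega
  · exfalso
    have hF : F = {n-5, n-4} := by
      apply Finset.ext; intro a
      simp only [Finset.mem_insert, Finset.mem_singleton]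
      constructor
      · intro ha
        rcases hmemF a ha with rfl | rfl | rfl
        · exact Or.inl rfl
        · exact Or.inr rfl
        · exact absurd ha h3
      · rintro (rfl | rfl)
        · exact h5
        · exact h4
    rw [hF, Finset.sum_insert (by simp only [Finset.mem_singleton]; omega),
      Finset.sum_singleton] at heq
    omega
  · exfalso
    have hF : F = {n-5, n-3} := by
      apply Finset.ext; intro a
      simp only [Finset.mem_insert, Finset.mem_singleton]
      constructor
      · intro ha
        rcases hmemF a ha with rfl | rfl | rfl
        · exact Or.inl rfl
        · exact absurd ha h4
        · exact Or.inr rfl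
      · rintro (rfl | rfl)
        · exact h5
        · exact h3
    rw [hF, Finset.sum_insert (by simp only [Finset.mem_singleton]; omega),
      Finset.sum_singleton] at heq
    omega
  · right
    have hF : F = {n-5} := by
      apply Finset.ext; intro a
      simp only [Finset.mem_singleton]
      constructor
      · intro ha
        rcases hmemF a ha with rfl | rfl | rfl
        · rfl
        · exact absurd ha h4
        · exact absurd ha h3
      · rintro rfl; exact h5
    exact repB n hn S F hrep' hF
  · left
    have hF : F = {n-4, n-3} := by
      apply Finset.ext; intro a
      simp only [Finset.mem_insert, Finset.mem_singleton]
      constructor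
      · intro ha
        rcases hmemF a ha with rfl | rfl | rfl
        · exact absurd ha h5
        · exact Or.inl rfl
        · exact Or.inr rfl
      · rintro (rfl | rfl)
        · exact h4
        · exact h3
    exact repA n hn S F hrep' hF
  · exfalso
    have hF : F = {n-4} := by
      apply Finset.ext; intro a
      simp only [Finset.mem_singleton]
      constructor
      · intro ha
        rcases hmemF a ha with rfl | rfl | rfl
        · exact absurd ha h5
        · rfl
        · exact absurd ha h3
      · rintro rfl; exact h4
    rw [hF, Finset.sum_singleton] at heq
    omega
  · exfalso
    have hF : F = {n-3} := by
      apply Finset.ext; intro a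
      simp only [Finset.mem_singleton]
      constructor
      · intro ha
        rcases hmemF a ha with rfl | rfl | rfl
        · exact absurd ha h5
        · exact absurd ha h4
        · rfl
      · rintro rfl; exact h3
    rw [hF, Finset.sum_singleton] at heq
    omega
  · exfalso
    have hF : F = ∅ := by
      apply Finset.eq_empty_iff_forall_notMem.mpr
      intro a ha
      rcases hmemF a ha with rfl | rfl | rfl
      · exact h5 ha
      · exact h4 ha
      · exact h3 ha
    rw [hF, Finset.sum_empty] at heq
    omega

lemma setEq1 (n : ℕ) (hn : 11 ≤ n) :
    {S : Finset ℕ | MaximalUnrefinable (T n - (n - 1)) S} = {P1 n} := by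
  ext S
  simp only [Set.mem_setOf_eq, Set.mem_singleton_iff]
  constructor
  · rintro ⟨hU, hmax⟩
    refine classify1 n hn S hU (le_antisymm (sup_le_bound n hn 1 (by omega) S hU) ?_)
    have := hmax (P1 n) (unrefP1 n hn)
    rwa [supP1 n hn] at this
  · rintro rfl
    exact ⟨unrefP1 n hn, fun S' h' => by
      rw [supP1 n hn]; exact sup_le_bound n hn 1 (by omega) S' h'⟩

lemma setEq3 (n : ℕ) (hn : 11 ≤ n) :
    {S : Finset ℕ | MaximalUnrefinable (T n - (n - 3)) S} = {P3 n} := by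
  ext S
  simp only [Set.mem_setOf_eq, Set.mem_singleton_iff]
  constructor
  · rintro ⟨hU, hmax⟩
    refine classify3 n hn S hU (le_antisymm (sup_le_bound n hn 3 (by omega) S hU) ?_)
    have := hmax (P3 n) (unrefP3 n hn)
    rwa [supP3 n hn] at this
  · rintro rfl
    exact ⟨unrefP3 n hn, fun S' h' => by
      rw [supP3 n hn]; exact sup_le_bound n hn 3 (by omega) S' h'⟩

lemma setEq5 (n : ℕ) (hn : 11 ≤ n) :
    {S : Finset ℕ | MaximalUnrefinable (T n - (n - 5)) S} = {P5A n, P5B n} := by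
  ext S
  simp only [Set.mem_setOf_eq, Set.mem_insert_iff, Set.mem_singleton_iff]
  constructor
  · rintro ⟨hU, hmax⟩
    refine classify5 n hn S hU (le_antisymm (sup_le_bound n hn 5 (by omega) S hU) ?_)
    have := hmax (P5A n) (unrefP5A n hn)
    rwa [supP5A n hn] at this
  · rintro (rfl | rfl)
    · exact ⟨unrefP5A n hn, fun S' h' => by
        rw [supP5A n hn]; exact sup_le_bound n hn 5 (by omega) S' h'⟩
    · exact ⟨unrefP5B n hn, fun S' h' => by
        rw [supP5B n hn]; exact sup_le_bound n hn 5 (by omega) S' h'⟩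

theorem count_large_d (n : ℕ) (hn : 11 ≤ n) :
    {S : Finset ℕ | MaximalUnrefinable (T n - (n - 1)) S}.ncard = 1 ∧
    {S : Finset ℕ | MaximalUnrefinable (T n - (n - 3)) S}.ncard = 1 ∧
    {S : Finset ℕ | MaximalUnrefinable (T n - (n - 5)) S}.ncard = 2 := by
  refine ⟨?_, ?_, ?_⟩
  · rw [setEq1 n hn]; exact Set.ncard_singleton _
  · rw [setEq3 n hn]; exact Set.ncard_singleton _
  · rw [setEq5 n hn]
    apply Set.ncard_pair
    intro h
    have h1 : n ∈ P5A n := (memP5A n n).mpr (by omega)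
    rw [h] at h1
    rw [memP5B] at h1
    omega
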